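/- arXiv:2108.03753 — 2 statements merged into one kernel-verified Lean document; each statement's English description precedes it below -/
import Mathlib

section
/- For every positive integer p and every real x with |x| < 1, ∑_{n=1}^∞ (1^p + 2^p + ⋯ + n^p) x^n = (1/(1-x)²) · ω_p(x/(1-x)), where ω_p(x) = ∑_{k=0}^p S(p,k) k! x^k. -/
open Finset Real

/-- Stirling numbers of the second kind. -/
def stirling2 : ℕ → ℕ → ℕ
  | 0, 0 => 1
  | 0, _ + 1 => 0
  | _ + 1, 0 => 0
  | p + 1, k + 1 => (k + 1) * stirling2 p (k + 1) + stirling2 p k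

/-- The geometric (Fubini) polynomial. -/
noncomputable def geomPoly (p : ℕ) (x : ℝ) : ℝ :=
  ∑ k ∈ Finset.range (p + 1), (stirling2 p k : ℝ) * k.factorial * x ^ k

lemma stirling2_eq_zero_of_lt : ∀ {p k : ℕ}, p < k → stirling2 p k = 0 := by
  intro p
  induction p with
  | zero => intro k h; match k, h with | k+1, _ => rfl
  | succ p ih =>
    intro k h
    match k, h with
    | k+1, h =>
      have h1 : stirling2 p (k+1) = 0 := ih (by omega)
      have h2 : stirling2 p k = 0 := ih (by omega)
      show (k + 1) * stirling2 p (k + 1) + stirling2 p k = 0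
      rw [h1, h2]; ring

lemma choose_mul_aux (n j : ℕ) :
    n * n.choose j = (j+1) * n.choose (j+1) + j * n.choose j := by
  rcases le_or_gt j n with h | h
  · have h1 : n.choose (j+1) * (j+1) = n.choose j * (n - j) := Nat.choose_succ_right_eq n j
    have h2 : n - j + j = n := Nat.sub_add_cancel h
    calc n * n.choose j = (n - j + j) * n.choose j := by rw [h2]
      _ = n.choose j * (n - j) + j * n.choose j := by ring
      _ = (j+1) * n.choose (j+1) + j * n.choose j := by rw [← h1]; ring
  · rw [Nat.choose_eq_zero_of_lt h, Nat.choose_eq_zero_of_lt (by omega : n < j+1)]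
    ring

lemma stirling2_sum_choose (p : ℕ) : ∀ n : ℕ,
    ∑ j ∈ range (p+1), stirling2 p j * j.factorial * n.choose j = n ^ p := by
  induction p with
  | zero => intro n; simp [stirling2]
  | succ p ih =>
    intro n
    have expand : n ^ (p+1)
        = ∑ j ∈ range (p+1), stirling2 p j * j.factorial * ((j+1) * n.choose (j+1))
          + ∑ j ∈ range (p+1), stirling2 p j * j.factorial * (j * n.choose j) := by
      rw [← Finset.sum_add_distrib]
      calc n ^ (p+1) = (∑ j ∈ range (p+1), stirling2 p j * j.factorial * n.choose j) * n := by
            rw [ih]; ring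
        _ = ∑ j ∈ range (p+1), stirling2 p j * j.factorial * (n * n.choose j) := by
            rw [Finset.sum_mul]; exact Finset.sum_congr rfl fun j _ => by ring
        _ = _ := Finset.sum_congr rfl fun j _ => by rw [choose_mul_aux]; ring
    rw [Finset.sum_range_succ']
    have f0 : stirling2 (p+1) 0 * Nat.factorial 0 * n.choose 0 = 0 := by
      show (0 : ℕ) * Nat.factorial 0 * n.choose 0 = 0; ring
    rw [f0, add_zero]
    have step : ∀ j, stirling2 (p+1) (j+1) = (j + 1) * stirling2 p (j + 1) + stirling2 p j :=
      fun j => rfl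
    calc ∑ j ∈ range (p+1), stirling2 (p+1) (j+1) * (j+1).factorial * n.choose (j+1)
        = ∑ j ∈ range (p+1), ((j+1) * stirling2 p (j+1) * (j+1).factorial * n.choose (j+1)
            + stirling2 p j * j.factorial * ((j+1) * n.choose (j+1))) := by
          refine Finset.sum_congr rfl fun j _ => ?_
          rw [step, Nat.factorial_succ]; ring
      _ = ∑ j ∈ range (p+1), (j+1) * stirling2 p (j+1) * (j+1).factorial * n.choose (j+1)
            + ∑ j ∈ range (p+1), stirling2 p j * j.factorial * ((j+1) * n.choose (j+1)) :=
          Finset.sum_add_distrib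
      _ = n ^ (p+1) := by
          rw [expand]
          rw [add_comm (∑ j ∈ range (p+1), stirling2 p j * j.factorial * ((j+1) * n.choose (j+1)))]
          congr 1
          rw [Finset.sum_range_succ, stirling2_eq_zero_of_lt (by omega : p < p + 1)]
          rw [Finset.sum_range_succ' (fun j => stirling2 p j * j.factorial * (j * n.choose j))]
          simp only [Nat.mul_zero, Nat.zero_mul, mul_zero, add_zero]
          refine Finset.sum_congr rfl fun j _ => ?_
          rw [Nat.factorial_succ]; ring

lemma sum_pow_eq (p : ℕ) (hp : 0 < p) (m : ℕ) :
    ∑ k ∈ Icc 1 m, k ^ p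
      = ∑ j ∈ range (p+1), stirling2 p j * j.factorial * (m+1).choose (j+1) := by
  calc ∑ k ∈ Icc 1 m, k ^ p
      = ∑ k ∈ Icc 1 m, ∑ j ∈ range (p+1), stirling2 p j * j.factorial * k.choose j :=
        Finset.sum_congr rfl fun k _ => (stirling2_sum_choose p k).symm
    _ = ∑ j ∈ range (p+1), ∑ k ∈ Icc 1 m, stirling2 p j * j.factorial * k.choose j :=
        Finset.sum_comm
    _ = _ := by
        refine Finset.sum_congr rfl fun j _ => ?_
        rw [← Finset.mul_sum]
        rcases j with _ | i
        · obtain ⟨q, rfl⟩ : ∃ q, p = q + 1 := ⟨p - 1, by omega⟩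
          show stirling2 (q+1) 0 * _ * _ = stirling2 (q+1) 0 * _ * _
          show (0 : ℕ) * _ * _ = (0:ℕ) * _ * _
          simp
        · congr 1
          rw [← Nat.sum_Icc_choose]
          refine (Finset.sum_subset (fun k hk => ?_) (fun k hk hk' => ?_)).symm
          · simp only [Finset.mem_Icc] at *; omega
          · exact Nat.choose_eq_zero_of_lt (by simp only [Finset.mem_Icc] at *; omega)

lemma summable_aux (j : ℕ) (x : ℝ) (hx' : ‖x‖ < 1) :
    Summable (fun m : ℕ => (((m+1).choose (j+1) : ℕ) : ℝ) * x ^ m) := by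
  rw [← summable_nat_add_iff j]
  have hF := summable_choose_mul_geometric_of_norm_lt_one (R := ℝ) (j+1) hx'
  have h := hF.mul_left (x ^ j)
  have h2 : (fun n : ℕ => (((n+j+1).choose (j+1) : ℕ) : ℝ) * x ^ (n+j))
      = fun n : ℕ => x ^ j * ((((n+(j+1)).choose (j+1) : ℕ) : ℝ) * x ^ n) := by
    funext n
    rw [show n + j + 1 = n + (j + 1) by omega, pow_add]
    ring
  exact h2 ▸ h

lemma tsum_aux (j : ℕ) (x : ℝ) (hx' : ‖x‖ < 1) :
    ∑' m : ℕ, (((m+1).choose (j+1) : ℕ) : ℝ) * x ^ m = x ^ j / (1-x) ^ (j+2) := by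
  rw [← Summable.sum_add_tsum_nat_add j (summable_aux j x hx')]
  have h1 : ∑ i ∈ range j, (((i+1).choose (j+1) : ℕ) : ℝ) * x ^ i = 0 := by
    refine Finset.sum_eq_zero fun i hi => ?_
    rw [Nat.choose_eq_zero_of_lt (by simp at hi; omega)]
    simp
  rw [h1, zero_add]
  have h2 : (fun t : ℕ => (((t+j+1).choose (j+1) : ℕ) : ℝ) * x ^ (t+j))
      = fun t : ℕ => x ^ j * ((((t+(j+1)).choose (j+1) : ℕ) : ℝ) * x ^ t) := by
    funext t
    rw [show t + j + 1 = t + (j + 1) by omega, pow_add]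
    ring
  rw [show (∑' t : ℕ, (((t+j+1).choose (j+1) : ℕ) : ℝ) * x ^ (t+j))
      = ∑' t : ℕ, x ^ j * ((((t+(j+1)).choose (j+1) : ℕ) : ℝ) * x ^ t) from by rw [h2]]
  rw [tsum_mul_left, tsum_choose_mul_geometric_of_norm_lt_one (j+1) hx']
  rw [div_eq_mul_inv]
  ring

lemma tsum_shift_aux (j : ℕ) (hj : 1 ≤ j) (x : ℝ) (hx' : ‖x‖ < 1) :
    ∑' n : ℕ, (((n+2).choose (j+1) : ℕ) : ℝ) * x ^ (n+1) = x ^ j / (1-x) ^ (j+2) := by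
  have hf := summable_aux j x hx'
  have h := Summable.sum_add_tsum_nat_add 1 hf
  rw [Finset.sum_range_one] at h
  have h0 : (((0+1).choose (j+1) : ℕ) : ℝ) * x ^ 0 = 0 := by
    rw [Nat.choose_eq_zero_of_lt (by omega)]
    simp
  rw [h0, zero_add] at h
  rw [show (∑' n : ℕ, (((n+2).choose (j+1) : ℕ) : ℝ) * x ^ (n+1))
      = ∑' n : ℕ, (((n+1+1).choose (j+1) : ℕ) : ℝ) * x ^ (n+1) from tsum_congr fun n => by
        norm_num]
  rw [h, tsum_aux j x hx']

theorem stmt_12 (p : ℕ) (hp : 0 < p) (x : ℝ) (hx : |x| < 1) :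
    ∑' n : ℕ, (∑ k ∈ Finset.Icc 1 (n + 1), (k : ℝ) ^ p) * x ^ (n + 1)
      = (1 / (1 - x) ^ 2) * geomPoly p (x / (1 - x)) := by
  have hx' : ‖x‖ < 1 := by rwa [Real.norm_eq_abs]
  have hx1 : (1 : ℝ) - x ≠ 0 := ne_of_gt (by linarith [(abs_lt.1 hx).2])
  have hA : ∀ n : ℕ, (∑ k ∈ Finset.Icc 1 (n + 1), (k : ℝ) ^ p) * x ^ (n + 1)
      = ∑ j ∈ range (p+1),
          (stirling2 p j : ℝ) * j.factorial * ((((n+2).choose (j+1) : ℕ) : ℝ) * x ^ (n+1)) := by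
    intro n
    have hnat := sum_pow_eq p hp (n+1)
    have hreal : ∑ k ∈ Finset.Icc 1 (n + 1), (k : ℝ) ^ p
        = ∑ j ∈ range (p+1), (stirling2 p j : ℝ) * j.factorial * ((n+2).choose (j+1) : ℕ) := by
      have := congrArg (Nat.cast : ℕ → ℝ) hnat
      push_cast at this ⊢
      convert this using 2
    rw [hreal, Finset.sum_mul]
    exact Finset.sum_congr rfl fun j _ => by ring
  calc ∑' n : ℕ, (∑ k ∈ Finset.Icc 1 (n + 1), (k : ℝ) ^ p) * x ^ (n + 1)
      = ∑' n : ℕ, ∑ j ∈ range (p+1),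
          (stirling2 p j : ℝ) * j.factorial * ((((n+2).choose (j+1) : ℕ) : ℝ) * x ^ (n+1)) :=
        tsum_congr hA
    _ = ∑ j ∈ range (p+1), ∑' n : ℕ,
          (stirling2 p j : ℝ) * j.factorial * ((((n+2).choose (j+1) : ℕ) : ℝ) * x ^ (n+1)) := by
        refine Summable.tsum_finsetSum fun j _ => Summable.mul_left _ ?_
        have := (summable_nat_add_iff 1).2 (summable_aux j x hx')
        exact this
    _ = ∑ j ∈ range (p+1),
          (1 / (1 - x) ^ 2) * ((stirling2 p j : ℝ) * j.factorial * (x / (1 - x)) ^ j) := by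
        refine Finset.sum_congr rfl fun j _ => ?_
        rw [tsum_mul_left]
        rcases j with _ | i
        · obtain ⟨q, rfl⟩ : ∃ q, p = q + 1 := ⟨p - 1, by omega⟩
          have hc0 : ((stirling2 (q+1) 0 : ℕ) : ℝ) = 0 := by norm_cast
          rw [hc0]
          ring
        · rw [tsum_shift_aux (i+1) (by omega) x hx', div_pow,
            pow_add ((1:ℝ)-x) (i+1) 2, div_mul_eq_div_div]
          ring
    _ = (1 / (1 - x) ^ 2) * geomPoly p (x / (1 - x)) := by
        rw [geomPoly, Finset.mul_sum]
end

section
/- For every nonnegative integer r, every positive integer p, and every real x with |x| < 1, ∑_{n=1}^∞ C(n+r, r) (1^p + 2^p + ⋯ + n^p) x^n = (1/r!) · d^r/dx^r [ x^r/(1-x)² · ω_p(x/(1-x)) ]. -/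
open Finset Real

lemma stirling2_eq_zero {p k : ℕ} (h : p < k) : stirling2 p k = 0 := by
  induction p generalizing k with
  | zero => cases k with
    | zero => omega
    | succ k => rfl
  | succ p ih =>
    cases k with
    | zero => omega
    | succ k =>
      show (k + 1) * stirling2 p (k + 1) + stirling2 p k = 0
      rw [ih (by omega), ih (by omega)]
      ring

lemma n_mul_choose (n k : ℕ) :
    n * n.choose k = (k + 1) * n.choose (k + 1) + k * n.choose k := by
  rcases le_or_gt k n with h | h
  · have h1 : (k + 1) * n.choose (k + 1) = n.choose k * (n - k) := by
      rw [mul_comm, Nat.choose_succ_right_eq]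
    rw [h1]
    have h2 : n - k + k = n := by omega
    calc n * n.choose k = n.choose k * ((n - k) + k) := by rw [h2]; ring
      _ = n.choose k * (n - k) + k * n.choose k := by ring
  · rw [Nat.choose_eq_zero_of_lt h, Nat.choose_eq_zero_of_lt (by omega)]
    ring

lemma pow_eq_sum (p n : ℕ) :
    n ^ p = ∑ k ∈ range (p + 1), stirling2 p k * k.factorial * n.choose k := by
  induction p with
  | zero => simp [stirling2]
  | succ p ih =>
    set g : ℕ → ℕ := fun j => j * (stirling2 p j * j.factorial * n.choose j) with hg
    have hA : ∑ k ∈ range (p + 1), g (k + 1) = ∑ k ∈ range (p + 1), g k := by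
      have h1 := Finset.sum_range_succ g (p + 1)
      have h2 := Finset.sum_range_succ' g (p + 1)
      have hgp : g (p + 1) = 0 := by
        simp [hg, stirling2_eq_zero (show p < p + 1 by omega)]
      have hg0 : g 0 = 0 := by simp [hg]
      omega
    calc n ^ (p + 1)
        = (∑ k ∈ range (p + 1), stirling2 p k * k.factorial * n.choose k) * n := by
          rw [pow_succ, ih]
      _ = ∑ k ∈ range (p + 1),
            (stirling2 p k * (k + 1).factorial * n.choose (k + 1) + g k) := by
          rw [Finset.sum_mul]
          refine Finset.sum_congr rfl fun k _ => ?_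
          have hc := n_mul_choose n k
          calc stirling2 p k * k.factorial * n.choose k * n
              = stirling2 p k * k.factorial * (n * n.choose k) := by ring
            _ = stirling2 p k * k.factorial *
                ((k + 1) * n.choose (k + 1) + k * n.choose k) := by rw [hc]
            _ = stirling2 p k * (k + 1).factorial * n.choose (k + 1) + g k := by
                simp only [hg, Nat.factorial_succ]; ring
      _ = (∑ k ∈ range (p + 1), stirling2 p k * (k + 1).factorial * n.choose (k + 1))
            + ∑ k ∈ range (p + 1), g k := Finset.sum_add_distrib
      _ = ∑ k ∈ range (p + 1),
            (stirling2 p k * (k + 1).factorial * n.choose (k + 1) + g (k + 1)) := by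
          rw [← hA, Finset.sum_add_distrib]
      _ = ∑ k ∈ range (p + 1), stirling2 (p + 1) (k + 1) * (k + 1).factorial * n.choose (k + 1) := by
          refine Finset.sum_congr rfl fun k _ => ?_
          show _ = ((k + 1) * stirling2 p (k + 1) + stirling2 p k) * (k + 1).factorial * n.choose (k + 1)
          simp only [hg]; ring
      _ = ∑ k ∈ range (p + 2), stirling2 (p + 1) k * k.factorial * n.choose k := by
          rw [Finset.sum_range_succ' (fun k => stirling2 (p + 1) k * k.factorial * n.choose k) (p + 1)]
          simp [show stirling2 (p + 1) 0 = 0 from rfl]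

lemma sum_Icc_choose' (n j : ℕ) (hj : 1 ≤ j) :
    ∑ k ∈ Icc 1 (n + 1), k.choose j = (n + 2).choose (j + 1) := by
  induction n with
  | zero =>
    rw [show Icc 1 1 = {1} from rfl, Finset.sum_singleton]
    match j, hj with
    | 1, _ => rfl
    | (j + 2), _ =>
      rw [Nat.choose_eq_zero_of_lt (by omega), Nat.choose_eq_zero_of_lt (by omega)]
  | succ n ih =>
    rw [Finset.sum_Icc_succ_top (by omega), ih]
    rw [show n + 1 + 1 = n + 2 by omega, show n + 1 + 2 = n + 2 + 1 by omega,
      Nat.choose_succ_succ (n + 2) j]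
    simp only [Nat.succ_eq_add_one]
    omega

lemma SN_eq (p : ℕ) (hp : 0 < p) (n : ℕ) :
    ∑ k ∈ Icc 1 (n + 1), k ^ p
      = ∑ j ∈ range (p + 1), stirling2 p j * j.factorial * (n + 2).choose (j + 1) := by
  have hp0 : stirling2 p 0 = 0 := by
    cases p with
    | zero => omega
    | succ p => rfl
  calc ∑ k ∈ Icc 1 (n + 1), k ^ p
      = ∑ k ∈ Icc 1 (n + 1), ∑ j ∈ range (p + 1), stirling2 p j * j.factorial * k.choose j :=
        Finset.sum_congr rfl fun k _ => pow_eq_sum p k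
    _ = ∑ j ∈ range (p + 1), ∑ k ∈ Icc 1 (n + 1), stirling2 p j * j.factorial * k.choose j :=
        Finset.sum_comm
    _ = ∑ j ∈ range (p + 1), stirling2 p j * j.factorial * (n + 2).choose (j + 1) := by
        refine Finset.sum_congr rfl fun j _ => ?_
        rw [← Finset.mul_sum]
        cases j with
        | zero => simp [hp0]
        | succ i => rw [sum_Icc_choose' n (i + 1) (by omega)]


def PB (A : ℕ → ℝ) : Prop := ∃ C : ℝ, 0 ≤ C ∧ ∃ d : ℕ, ∀ n : ℕ, |A n| ≤ C * ((n : ℝ) + 1) ^ d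

lemma nat_pow_bound (n d : ℕ) : (n + 1) ^ d ≤ 2 ^ d * (n ^ d + 1) := by
  cases n with
  | zero =>
    have h1 : 1 ≤ 2 ^ d := Nat.one_le_two_pow
    have h2 : 1 ≤ 0 ^ d + 1 := Nat.le_add_left 1 _
    calc (0 + 1) ^ d = 1 * 1 := by norm_num
      _ ≤ 2 ^ d * (0 ^ d + 1) := Nat.mul_le_mul h1 h2
  | succ n =>
    calc (n + 1 + 1) ^ d ≤ (2 * (n + 1)) ^ d := Nat.pow_le_pow_left (by omega) d
      _ = 2 ^ d * (n + 1) ^ d := Nat.mul_pow 2 (n + 1) d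
      _ ≤ 2 ^ d * ((n + 1) ^ d + 1) := Nat.mul_le_mul_left _ (by omega)

lemma summable_aux_s17 (d : ℕ) {s : ℝ} (hs : |s| < 1) :
    Summable (fun n : ℕ => ((n : ℝ) + 1) ^ d * s ^ n) := by
  have habs : ‖|s|‖ < 1 := by rwa [Real.norm_eq_abs, abs_abs]
  have h1 : Summable (fun n : ℕ => (2 : ℝ) ^ d * ((n : ℝ) ^ d * |s| ^ n)) :=
    (summable_pow_mul_geometric_of_norm_lt_one d habs).mul_left _
  have h2 : Summable (fun n : ℕ => (2 : ℝ) ^ d * |s| ^ n) :=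
    (summable_geometric_of_lt_one (abs_nonneg s) hs).mul_left _
  refine Summable.of_norm_bounded (h1.add h2) fun n => ?_
  rw [norm_mul, norm_pow, norm_pow, Real.norm_eq_abs, Real.norm_eq_abs]
  have hb : (((n : ℝ) + 1)) ^ d ≤ 2 ^ d * ((n : ℝ) ^ d + 1) := by
    have := nat_pow_bound n d
    exact_mod_cast this
  have h0 : (0 : ℝ) ≤ |s| ^ n := by positivity
  calc |(n : ℝ) + 1| ^ d * |s| ^ n = ((n : ℝ) + 1) ^ d * |s| ^ n := by
        rw [abs_of_nonneg (by positivity)]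
    _ ≤ (2 ^ d * ((n : ℝ) ^ d + 1)) * |s| ^ n := by
        exact mul_le_mul_of_nonneg_right hb h0
    _ = 2 ^ d * ((n : ℝ) ^ d * |s| ^ n) + 2 ^ d * |s| ^ n := by ring

lemma PB_summable {A : ℕ → ℝ} (h : PB A) {x : ℝ} (hx : |x| < 1) :
    Summable (fun n : ℕ => A n * x ^ n) := by
  obtain ⟨C, hC, d, hA⟩ := h
  have habs : |(|x|)| < 1 := by rwa [abs_abs]
  refine Summable.of_norm_bounded (((summable_aux_s17 d habs).mul_left C)) fun n => ?_
  rw [norm_mul, norm_pow, Real.norm_eq_abs, Real.norm_eq_abs]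
  calc |A n| * |x| ^ n ≤ (C * ((n : ℝ) + 1) ^ d) * |x| ^ n :=
      mul_le_mul_of_nonneg_right (hA n) (by positivity)
    _ = C * (((n : ℝ) + 1) ^ d * |x| ^ n) := by ring

lemma PB_shift {A : ℕ → ℝ} (h : PB A) : PB (fun n => ((n : ℝ) + 1) * A (n + 1)) := by
  obtain ⟨C, hC, d, hA⟩ := h
  refine ⟨C * 2 ^ (d + 1), by positivity, d + 1, fun n => ?_⟩
  have h1 : |((n : ℝ) + 1) * A (n + 1)| = ((n : ℝ) + 1) * |A (n + 1)| := by
    rw [abs_mul, abs_of_nonneg (by positivity)]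
  have h2 : ((n : ℝ) + 1 + 1) ≤ 2 * ((n : ℝ) + 1) := by linarith [Nat.cast_nonneg (α := ℝ) n]
  calc |((n : ℝ) + 1) * A (n + 1)| = ((n : ℝ) + 1) * |A (n + 1)| := h1
    _ ≤ ((n : ℝ) + 1) * (C * (((n : ℝ) + 1) + 1) ^ d) := by
        refine mul_le_mul_of_nonneg_left ?_ (by positivity)
        have := hA (n + 1); push_cast at this ⊢; linarith
    _ ≤ ((n : ℝ) + 1 + 1) * (C * (((n : ℝ) + 1) + 1) ^ d) := by
        refine mul_le_mul_of_nonneg_right (by linarith) (by positivity)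
    _ = C * ((n : ℝ) + 2) ^ (d + 1) := by rw [pow_succ]; ring_nf
    _ ≤ C * (2 * ((n : ℝ) + 1)) ^ (d + 1) := by
        refine mul_le_mul_of_nonneg_left (pow_le_pow_left₀ (by positivity) (by linarith [Nat.cast_nonneg (α := ℝ) n]) _) hC
    _ = C * 2 ^ (d + 1) * ((n : ℝ) + 1) ^ (d + 1) := by rw [mul_pow]; ring

lemma PB_desc {A : ℕ → ℝ} (h : PB A) (r : ℕ) :
    PB (fun n => (((n + r).descFactorial r : ℕ) : ℝ) * A (n + r)) := by
  obtain ⟨C, hC, d, hA⟩ := h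
  refine ⟨C * ((r : ℝ) + 1) ^ (r + d), by positivity, r + d, fun n => ?_⟩
  have hd : (((n + r).descFactorial r : ℕ) : ℝ) ≤ ((n : ℝ) + (r : ℝ) + 1) ^ r := by
    have h1 : (n + r).descFactorial r ≤ (n + r + 1) ^ r :=
      le_trans (Nat.descFactorial_le_pow _ _) (Nat.pow_le_pow_left (by omega) _)
    calc (((n + r).descFactorial r : ℕ) : ℝ) ≤ (((n + r + 1) ^ r : ℕ) : ℝ) := by exact_mod_cast h1
      _ = ((n : ℝ) + (r : ℝ) + 1) ^ r := by push_cast; ring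
  have hAn : |A (n + r)| ≤ C * ((n : ℝ) + (r : ℝ) + 1) ^ d := by
    have := hA (n + r); push_cast at this ⊢; linarith
  have hkey : ((n : ℝ) + (r : ℝ) + 1) ≤ ((r : ℝ) + 1) * ((n : ℝ) + 1) := by
    have h1 : (0:ℝ) ≤ (r : ℝ) * (n : ℝ) := by positivity
    linarith
  have hnn : (0:ℝ) ≤ (n : ℝ) + (r : ℝ) + 1 := by positivity
  calc |(((n + r).descFactorial r : ℕ) : ℝ) * A (n + r)|
      = (((n + r).descFactorial r : ℕ) : ℝ) * |A (n + r)| := by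
        rw [abs_mul, abs_of_nonneg (by positivity)]
    _ ≤ ((n : ℝ) + (r : ℝ) + 1) ^ r * (C * ((n : ℝ) + (r : ℝ) + 1) ^ d) := by
        exact mul_le_mul hd hAn (abs_nonneg _) (by positivity)
    _ = C * ((n : ℝ) + (r : ℝ) + 1) ^ (r + d) := by rw [pow_add]; ring
    _ ≤ C * (((r : ℝ) + 1) * ((n : ℝ) + 1)) ^ (r + d) := by
        exact mul_le_mul_of_nonneg_left (pow_le_pow_left₀ hnn hkey _) hC
    _ = C * ((r : ℝ) + 1) ^ (r + d) * ((n : ℝ) + 1) ^ (r + d) := by rw [mul_pow]; ring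

lemma hasDerivAt_tsum_pb {A : ℕ → ℝ} (h : PB A) {x : ℝ} (hx : |x| < 1) :
    HasDerivAt (fun y : ℝ => ∑' n : ℕ, A n * y ^ n)
      (∑' n : ℕ, ((n : ℝ) + 1) * A (n + 1) * x ^ n) x := by
  obtain ⟨C, hC0, d, hA⟩ := h
  set s : ℝ := (1 + |x|) / 2 with hsdef
  have hxnn : 0 ≤ |x| := abs_nonneg x
  have hs0 : 0 < s := by positivity
  have hs1 : s < 1 := by rw [hsdef]; linarith
  have hxs : |x| < s := by rw [hsdef]; linarith
  set u : ℕ → ℝ := fun n => C * (((n : ℝ) + 1) ^ (d + 1) * s ^ n) / s with hu_def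
  have hu : Summable u := by
    have : Summable (fun n : ℕ => ((n : ℝ) + 1) ^ (d + 1) * s ^ n) :=
      summable_aux_s17 (d + 1) (by rwa [abs_of_pos hs0])
    exact (this.mul_left C).div_const s
  have hbound : ∀ (n : ℕ) (y : ℝ), y ∈ Set.Ioo (-s) s →
      ‖A n * ((n : ℝ) * y ^ (n - 1))‖ ≤ u n := by
    intro n y hy
    have hys : |y| ≤ s := by
      rw [abs_le]; exact ⟨hy.1.le, hy.2.le⟩
    cases n with
    | zero =>
      simp only [Nat.cast_zero, zero_mul, mul_zero, norm_zero]
      rw [hu_def]; positivity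
    | succ m =>
      have husimp : u (m + 1) = C * ((m : ℝ) + 2) ^ (d + 1) * s ^ m := by
        rw [hu_def]
        field_simp
        rw [pow_succ]
        push_cast
        ring
      rw [husimp, norm_mul, Real.norm_eq_abs, Real.norm_eq_abs]
      have h1 : |A (m + 1)| ≤ C * ((m : ℝ) + 2) ^ d := by
        have := hA (m + 1)
        push_cast at this
        have he : ((m : ℝ) + 1 + 1) = (m : ℝ) + 2 := by ring
        rwa [he] at this
      have h2 : |((m + 1 : ℕ) : ℝ) * y ^ (m + 1 - 1)| ≤ ((m : ℝ) + 2) * s ^ m := by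
        rw [abs_mul, abs_pow]
        have hy' : |y| ^ m ≤ s ^ m := pow_le_pow_left₀ (abs_nonneg y) hys m
        have : |((m + 1 : ℕ) : ℝ)| = (m : ℝ) + 1 := by
          rw [abs_of_nonneg (by positivity)]; push_cast; ring
        rw [this]
        calc ((m : ℝ) + 1) * |y| ^ m ≤ ((m : ℝ) + 1) * s ^ m :=
            mul_le_mul_of_nonneg_left hy' (by positivity)
          _ ≤ ((m : ℝ) + 2) * s ^ m :=
            mul_le_mul_of_nonneg_right (by linarith) (by positivity)
      calc |A (m + 1)| * |((m + 1 : ℕ) : ℝ) * y ^ (m + 1 - 1)|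
          ≤ (C * ((m : ℝ) + 2) ^ d) * (((m : ℝ) + 2) * s ^ m) :=
            mul_le_mul h1 h2 (abs_nonneg _) (by positivity)
        _ = C * ((m : ℝ) + 2) ^ (d + 1) * s ^ m := by rw [pow_succ]; ring
  have hmemx : x ∈ Set.Ioo (-s) s := by
    rcases abs_lt.mp hxs with ⟨h1, h2⟩; exact ⟨h1, h2⟩
  have hmem0 : (0 : ℝ) ∈ Set.Ioo (-s) s := ⟨by linarith, hs0⟩
  have hsum0 : Summable (fun n : ℕ => A n * (0 : ℝ) ^ n) := by
    refine summable_of_ne_finset_zero (s := {0}) fun n hn => ?_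
    have : n ≠ 0 := by simpa using hn
    rw [zero_pow this, mul_zero]
  have key := hasDerivAt_tsum_of_isPreconnected hu isOpen_Ioo isPreconnected_Ioo
    (g := fun n y => A n * y ^ n) (g' := fun n y => A n * ((n : ℝ) * y ^ (n - 1)))
    (fun n y _ => (hasDerivAt_pow n y).const_mul (A n))
    hbound hmem0 hsum0 hmemx
  have hsumx : Summable (fun n : ℕ => A n * ((n : ℝ) * x ^ (n - 1))) :=
    hu.of_norm_bounded fun n => hbound n x hmemx
  have heq : ∑' n : ℕ, A n * ((n : ℝ) * x ^ (n - 1))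
      = ∑' n : ℕ, ((n : ℝ) + 1) * A (n + 1) * x ^ n := by
    rw [Summable.tsum_eq_zero_add hsumx]
    simp only [Nat.cast_zero, zero_mul, mul_zero, zero_add]
    refine tsum_congr fun n => ?_
    push_cast
    ring_nf
  rwa [heq] at key

lemma iteratedDeriv_congr_of_isOpen {f g : ℝ → ℝ} {s : Set ℝ} (hs : IsOpen s)
    (h : ∀ y ∈ s, f y = g y) (r : ℕ) : ∀ y ∈ s, iteratedDeriv r f y = iteratedDeriv r g y := by
  induction r with
  | zero => simpa using h
  | succ r ih =>
    intro y hy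
    rw [iteratedDeriv_succ, iteratedDeriv_succ]
    refine Filter.EventuallyEq.deriv_eq ?_
    exact Filter.eventually_of_mem (hs.mem_nhds hy) ih

lemma iter_hasSum (r : ℕ) : ∀ (A : ℕ → ℝ), PB A → ∀ x : ℝ, |x| < 1 →
    HasSum (fun n : ℕ => (((n + r).descFactorial r : ℕ) : ℝ) * A (n + r) * x ^ n)
      (iteratedDeriv r (fun y : ℝ => ∑' n : ℕ, A n * y ^ n) x) := by
  induction r with
  | zero =>
    intro A hA x hx
    simpa using (PB_summable hA hx).hasSum
  | succ r ih =>
    intro A hA x hx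
    set B : ℕ → ℝ := fun n => (((n + r).descFactorial r : ℕ) : ℝ) * A (n + r) with hB_def
    have hB : PB B := PB_desc hA r
    have hB' : PB (fun n => ((n : ℝ) + 1) * B (n + 1)) := PB_shift hB
    have heq : ∀ y : ℝ, |y| < 1 →
        iteratedDeriv r (fun z : ℝ => ∑' n : ℕ, A n * z ^ n) y = ∑' n : ℕ, B n * y ^ n :=
      fun y hy => ((ih A hA y hy).tsum_eq).symm
    have hx1 : x ∈ Set.Ioo (-1 : ℝ) 1 := by
      rcases abs_lt.mp hx with ⟨h1, h2⟩; exact ⟨h1, h2⟩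
    have hEv : iteratedDeriv r (fun z : ℝ => ∑' n : ℕ, A n * z ^ n)
        =ᶠ[nhds x] fun y => ∑' n : ℕ, B n * y ^ n := by
      filter_upwards [isOpen_Ioo.mem_nhds hx1] with y hy
      exact heq y (abs_lt.mpr ⟨hy.1, hy.2⟩)
    have hder : HasDerivAt (fun y : ℝ => ∑' n : ℕ, B n * y ^ n)
        (∑' n : ℕ, ((n : ℝ) + 1) * B (n + 1) * x ^ n) x := hasDerivAt_tsum_pb hB hx
    have hval : iteratedDeriv (r + 1) (fun z : ℝ => ∑' n : ℕ, A n * z ^ n) x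
        = ∑' n : ℕ, ((n : ℝ) + 1) * B (n + 1) * x ^ n := by
      rw [iteratedDeriv_succ, hEv.deriv_eq, hder.deriv]
    have hfun : (fun n : ℕ => (((n + (r + 1)).descFactorial (r + 1) : ℕ) : ℝ) * A (n + (r + 1)) * x ^ n)
        = fun n : ℕ => ((n : ℝ) + 1) * B (n + 1) * x ^ n := by
      funext n
      have hnat : (n + (r + 1)).descFactorial (r + 1) = (n + 1) * ((n + 1 + r).descFactorial r) := by
        rw [show n + (r + 1) = n + 1 + r by omega, Nat.descFactorial_succ,
          show n + 1 + r - r = n + 1 by omega]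
      rw [hB_def]
      simp only
      rw [hnat]
      push_cast
      ring
    rw [hfun, hval]
    exact (PB_summable hB' hx).hasSum

lemma hasSum_geom_shift {y : ℝ} (hy : |y| < 1) (i : ℕ) :
    HasSum (fun n : ℕ => (((n + 2).choose (i + 2) : ℕ) : ℝ) * y ^ (n + 1))
      (y ^ (i + 1) / (1 - y) ^ (i + 3)) := by
  have hnorm : ‖y‖ < 1 := by rwa [Real.norm_eq_abs]
  have base := hasSum_choose_mul_geometric_of_norm_lt_one (i + 2) hnorm
  have h1 : HasSum
      (fun m : ℕ => (fun n : ℕ => (((n + 2).choose (i + 2) : ℕ) : ℝ) * y ^ (n + 1)) (m + i))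
      (y ^ (i + 1) * (1 / (1 - y) ^ (i + 2 + 1))) := by
    have h0 := base.mul_left (y ^ (i + 1))
    have hfeq : (fun m : ℕ => y ^ (i + 1) * ((((m + (i + 2)).choose (i + 2) : ℕ) : ℝ) * y ^ m))
        = fun m : ℕ =>
          (fun n : ℕ => (((n + 2).choose (i + 2) : ℕ) : ℝ) * y ^ (n + 1)) (m + i) := by
      funext m
      simp only
      rw [show m + i + 2 = m + (i + 2) by omega, show m + i + 1 = (i + 1) + m by omega, pow_add]
      ring
    exact hfeq ▸ h0
  have h3 := (hasSum_nat_add_iff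
    (f := fun n : ℕ => (((n + 2).choose (i + 2) : ℕ) : ℝ) * y ^ (n + 1)) i).mp h1
  have hz : ∑ k ∈ range i, (((k + 2).choose (i + 2) : ℕ) : ℝ) * y ^ (k + 1) = 0 := by
    refine Finset.sum_eq_zero fun k hk => ?_
    have hk' : k < i := Finset.mem_range.mp hk
    rw [Nat.choose_eq_zero_of_lt (by omega)]
    simp
  rw [hz, add_zero, mul_one_div] at h3
  have : i + 2 + 1 = i + 3 := by omega
  rwa [this] at h3

lemma hasSum_A_eq (p : ℕ) (hp : 0 < p) (r : ℕ) {y : ℝ} (hy : |y| < 1) :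
    HasSum (fun n : ℕ => ((∑ k ∈ Icc 1 (n + 1), k ^ p : ℕ) : ℝ) * y ^ (n + (r + 1)))
      (y ^ r / (1 - y) ^ 2 * geomPoly p (y / (1 - y))) := by
  have hy1 : (0 : ℝ) < 1 - y := by
    rcases abs_lt.mp hy with ⟨h1, h2⟩; linarith
  have hy1' : (1 : ℝ) - y ≠ 0 := ne_of_gt hy1
  set c : ℕ → ℝ := fun j =>
    ((stirling2 p j * j.factorial : ℕ) : ℝ) * (y ^ j * y ^ r / (1 - y) ^ (j + 2)) with hc
  have hterm : ∀ j ∈ range (p + 1),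
      HasSum (fun n : ℕ =>
        ((stirling2 p j * j.factorial * (n + 2).choose (j + 1) : ℕ) : ℝ) * y ^ (n + (r + 1)))
        (c j) := by
    intro j _
    cases j with
    | zero =>
      have hz : stirling2 p 0 = 0 := by
        cases p with
        | zero => omega
        | succ q => rfl
      have hf : (fun n : ℕ =>
          ((stirling2 p 0 * Nat.factorial 0 * (n + 2).choose (0 + 1) : ℕ) : ℝ) * y ^ (n + (r + 1)))
          = fun _ : ℕ => (0 : ℝ) := by
        funext n; rw [hz]; simp
      rw [hf, hc]
      simp only [hz]
      simpa using hasSum_zero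
    | succ i =>
      have h1 := (hasSum_geom_shift hy i).mul_left
        (((stirling2 p (i + 1) * (i + 1).factorial : ℕ) : ℝ) * y ^ r)
      have hfe : (fun n : ℕ =>
          (((stirling2 p (i + 1) * (i + 1).factorial : ℕ) : ℝ) * y ^ r) *
            ((((n + 2).choose (i + 2) : ℕ) : ℝ) * y ^ (n + 1)))
          = fun n : ℕ =>
            ((stirling2 p (i + 1) * (i + 1).factorial * (n + 2).choose (i + 1 + 1) : ℕ) : ℝ) *
              y ^ (n + (r + 1)) := by
        funext n
        rw [show n + (r + 1) = (n + 1) + r by omega, pow_add, show i + 1 + 1 = i + 2 by omega]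
        push_cast
        ring
      have hval : (((stirling2 p (i + 1) * (i + 1).factorial : ℕ) : ℝ) * y ^ r) *
          (y ^ (i + 1) / (1 - y) ^ (i + 3)) = c (i + 1) := by
        rw [hc]
        simp only
        rw [show i + 1 + 2 = i + 3 by omega]
        ring
      rw [← hfe, ← hval]
      exact h1
  have hsum := hasSum_sum hterm
  have hleft : (fun n : ℕ => ∑ j ∈ range (p + 1),
      ((stirling2 p j * j.factorial * (n + 2).choose (j + 1) : ℕ) : ℝ) * y ^ (n + (r + 1)))
      = fun n : ℕ => ((∑ k ∈ Icc 1 (n + 1), k ^ p : ℕ) : ℝ) * y ^ (n + (r + 1)) := by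
    funext n
    rw [← Finset.sum_mul, ← Nat.cast_sum, ← SN_eq p hp n]
  have hright : ∑ j ∈ range (p + 1), c j
      = y ^ r / (1 - y) ^ 2 * geomPoly p (y / (1 - y)) := by
    rw [geomPoly, Finset.mul_sum]
    refine Finset.sum_congr rfl fun j _ => ?_
    rw [hc]
    simp only
    rw [div_pow, pow_add]
    push_cast
    field_simp
  rw [hleft, hright] at hsum
  exact hsum

theorem stmt_17 (r : ℕ) (p : ℕ) (hp : 0 < p) (x : ℝ) (hx : |x| < 1) :
    ∑' n : ℕ, ((n + 1 + r).choose r : ℝ) * (∑ k ∈ Finset.Icc 1 (n + 1), (k : ℝ) ^ p) * x ^ (n + 1)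
      = (1 / r.factorial) *
          iteratedDeriv r (fun y => y ^ r / (1 - y) ^ 2 * geomPoly p (y / (1 - y))) x := by
  set A : ℕ → ℝ := fun m =>
    if r + 1 ≤ m then ((∑ k ∈ Icc 1 (m - (r + 1) + 1), k ^ p : ℕ) : ℝ) else 0 with hA_def
  have hSN_le : ∀ n : ℕ, (∑ k ∈ Icc 1 (n + 1), k ^ p) ≤ (n + 1) ^ (p + 1) := by
    intro n
    calc ∑ k ∈ Icc 1 (n + 1), k ^ p ≤ ∑ _k ∈ Icc 1 (n + 1), (n + 1) ^ p :=
        Finset.sum_le_sum fun k hk => Nat.pow_le_pow_left (Finset.mem_Icc.mp hk).2 p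
      _ = (n + 1) * (n + 1) ^ p := by
        rw [Finset.sum_const, Nat.card_Icc]
        simp [smul_eq_mul]
      _ = (n + 1) ^ (p + 1) := by rw [pow_succ]; ring
  have hPB : PB A := by
    refine ⟨1, zero_le_one, p + 1, fun m => ?_⟩
    rw [one_mul, hA_def]
    simp only
    split_ifs with h
    · rw [abs_of_nonneg (by positivity)]
      have h1 : (∑ k ∈ Icc 1 (m - (r + 1) + 1), k ^ p) ≤ (m + 1) ^ (p + 1) :=
        le_trans (hSN_le _) (Nat.pow_le_pow_left (by omega) _)
      exact_mod_cast h1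
    · rw [abs_zero]; positivity
  have h_toF : ∀ y : ℝ, |y| < 1 →
      (∑' m : ℕ, A m * y ^ m) = y ^ r / (1 - y) ^ 2 * geomPoly p (y / (1 - y)) := by
    intro y hy
    have H2 := hasSum_A_eq p hp r hy
    have hfe : (fun n : ℕ => A (n + (r + 1)) * y ^ (n + (r + 1)))
        = fun n : ℕ => ((∑ k ∈ Icc 1 (n + 1), k ^ p : ℕ) : ℝ) * y ^ (n + (r + 1)) := by
      funext n
      rw [hA_def]
      simp only
      rw [if_pos (by omega : r + 1 ≤ n + (r + 1)), show n + (r + 1) - (r + 1) = n by omega]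
    have H3 : HasSum (fun n : ℕ => A (n + (r + 1)) * y ^ (n + (r + 1)))
        (y ^ r / (1 - y) ^ 2 * geomPoly p (y / (1 - y))) := by rw [hfe]; exact H2
    have H4 := (hasSum_nat_add_iff (f := fun m : ℕ => A m * y ^ m) (r + 1)).mp H3
    have hz : ∑ i ∈ range (r + 1), A i * y ^ i = 0 := by
      refine Finset.sum_eq_zero fun i hi => ?_
      have : ¬ (r + 1 ≤ i) := by
        have := Finset.mem_range.mp hi; omega
      rw [hA_def]
      simp only
      rw [if_neg this, zero_mul]
    rw [hz, add_zero] at H4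
    exact H4.tsum_eq
  have hiter := iter_hasSum r A hPB x hx
  have hx1 : x ∈ Set.Ioo (-1 : ℝ) 1 := by
    rcases abs_lt.mp hx with ⟨h1, h2⟩; exact ⟨h1, h2⟩
  have hrepl : iteratedDeriv r (fun y : ℝ => ∑' n : ℕ, A n * y ^ n) x
      = iteratedDeriv r (fun y : ℝ => y ^ r / (1 - y) ^ 2 * geomPoly p (y / (1 - y))) x :=
    iteratedDeriv_congr_of_isOpen isOpen_Ioo
      (fun y hy => h_toF y (abs_lt.mpr ⟨hy.1, hy.2⟩)) r x hx1
  rw [hrepl] at hiter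
  set S := iteratedDeriv r (fun y : ℝ => y ^ r / (1 - y) ^ 2 * geomPoly p (y / (1 - y))) x
  set f : ℕ → ℝ := fun n => (((n + r).descFactorial r : ℕ) : ℝ) * A (n + r) * x ^ n with hf_def
  have hf0 : f 0 = 0 := by
    rw [hf_def]
    simp only
    rw [hA_def]
    simp only
    rw [if_neg (by omega : ¬ (r + 1 ≤ 0 + r))]
    ring
  have hiter' : HasSum f (S + ∑ i ∈ range 1, f i) := by
    rw [Finset.sum_range_one, hf0, add_zero]
    exact hiter
  have hshift := (hasSum_nat_add_iff (f := f) 1).mpr hiter'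
  have htsum := hshift.tsum_eq
  rw [← htsum, ← tsum_mul_left]
  refine tsum_congr fun n => ?_
  have hA' : A (n + 1 + r) = ((∑ k ∈ Icc 1 (n + 1), k ^ p : ℕ) : ℝ) := by
    rw [hA_def]
    simp only
    rw [if_pos (by omega : r + 1 ≤ n + 1 + r), show n + 1 + r - (r + 1) = n by omega]
  have hdesc : ((n + 1 + r).descFactorial r : ℕ) = r.factorial * (n + 1 + r).choose r :=
    Nat.descFactorial_eq_factorial_mul_choose _ _
  have hcast : (∑ k ∈ Icc 1 (n + 1), (k : ℝ) ^ p) = ((∑ k ∈ Icc 1 (n + 1), k ^ p : ℕ) : ℝ) := by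
    push_cast
    rfl
  rw [hf_def]
  simp only
  rw [hA', hdesc, hcast]
  have hfac : (r.factorial : ℝ) ≠ 0 := by
    exact_mod_cast Nat.factorial_ne_zero r
  push_cast
  field_simp
end
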